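/- Let σ : S → E be a strategy (total, receptive, innocent map of event structures with polarity). For any configuration x of S and any configuration y of E with σx ⊆ y such that y \ σx contains only negative events, there is a unique configuration x' ⊇ x of S with σx' = y. -/

import Mathlib

/-- The order and consistency data of an event structure. -/
structure PreES (E : Type) where
  le : E → E → Prop
  con : Set E → Prop

namespace PreES

variable {E F : Type}

/-- A configuration: every finite subset is consistent, and it is down-closed. -/
def Config (P : PreES E) (x : Set E) : Prop :=
  (∀ X : Set E, X ⊆ x → X.Finite → P.con X) ∧
  (∀ e e' : E, P.le e' e → e ∈ x → e' ∈ x)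

/-- `e` is enabled at the configuration `x`: `x ∪ {e}` is again a configuration. -/
def Enabled (P : PreES E) (x : Set E) (e : E) : Prop :=
  e ∉ x ∧ P.Config (insert e x)

/-- Immediate causal dependency `e → e'` : `e ≠ e'`, `e ≤ e'` and nothing strictly between. -/
def Imm (P : PreES E) (e e' : E) : Prop :=
  e ≠ e' ∧ P.le e e' ∧ ∀ d, P.le e d → P.le d e' → d = e ∨ d = e'

/-- A total map of event structures: configurations map to configurations,
injectively on each configuration. -/
def IsMap (P : PreES E) (Q : PreES F) (f : E → F) : Prop :=
  (∀ x : Set E, P.Config x → Q.Config (f '' x)) ∧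
  (∀ x : Set E, P.Config x → ∀ e₁ ∈ x, ∀ e₂ ∈ x, f e₁ = f e₂ → e₁ = e₂)

end PreES

/-- An event structure. -/
structure ES (E : Type) extends PreES E where
  le_refl : ∀ e, le e e
  le_trans : ∀ a b c, le a b → le b c → le a c
  le_antisymm : ∀ a b, le a b → le b a → a = b
  causes_finite : ∀ e, {e' | le e' e}.Finite
  con_singleton : ∀ e, con {e}
  con_subset : ∀ X Y : Set E, Y ⊆ X → con X → con Y
  con_extend : ∀ (X : Set E) (e e' : E), con X → le e e' → e' ∈ X → con (insert e X)

/-- No-overlap: events carrying the same variable are never concurrent. -/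
def NoOverlap {E V : Type} (P : PreES E) (var : E → V) : Prop :=
  ∀ e e', var e = var e' →
    ¬(P.con {e, e'} ∧ ¬ P.le e e' ∧ ¬ P.le e' e)

/-- Race-freeness: enabled events of opposite polarities can occur jointly.
`true` is the polarity `+`, `false` is `−`. -/
def RaceFree {E : Type} (P : PreES E) (pol : E → Bool) : Prop :=
  ∀ x : Set E, P.Config x → ∀ e e', P.Enabled x e → P.Enabled x e' →
    pol e = true → pol e' = false → e ≠ e' → P.Config (insert e (insert e' x))

/-- An (ordinary) strategy: a total, polarity preserving map of event structures
which is receptive and innocent. -/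
def IsStrategy {SE E : Type} (S : PreES SE) (G : PreES E)
    (polS : SE → Bool) (polG : E → Bool) (σ : SE → E) : Prop :=
  PreES.IsMap S G σ ∧
  (∀ s, polG (σ s) = polS s) ∧
  (∀ x : Set SE, S.Config x → ∀ e, polG e = false → G.Enabled (σ '' x) e →
    ∃! s, S.Enabled x s ∧ σ s = e) ∧
  (∀ s s', S.Imm s s' → (polS s' = false ∨ polS s = true) → G.Imm (σ s) (σ s'))

/-- An `𝓐`-strategy on an `𝓐`-game: a total, polarity preserving map with an
instantiation function of matching sorts, receptive (for every element of
matching sort) and innocent. -/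
def IsAStrategy {SE E A V Srt : Type} (S : PreES SE) (G : PreES E)
    (polS : SE → Bool) (polG : E → Bool) (var : E → V)
    (sortA : A → Srt) (sortV : V → Srt)
    (σ : SE → E) (inst : SE → A) : Prop :=
  PreES.IsMap S G σ ∧
  (∀ s, polG (σ s) = polS s) ∧
  (∀ s, sortA (inst s) = sortV (var (σ s))) ∧
  (∀ x : Set SE, S.Config x → ∀ e, polG e = false → G.Enabled (σ '' x) e →
    ∀ a, sortA a = sortV (var e) →
      ∃! s, S.Enabled x s ∧ σ s = e ∧ inst s = a) ∧
  (∀ s s', S.Imm s s' → (polS s' = false ∨ polS s = true) → G.Imm (σ s) (σ s'))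

/-- An event of the `𝓐`-expansion: an event `e` together with a sort-respecting
instantiation of its down-closure `[e]` (encoded as an `Option`-valued function
whose domain is exactly `[e]`). -/
structure ExEvent {E A V Srt : Type} (P : PreES E) (var : E → V)
    (sortA : A → Srt) (sortV : V → Srt) where
  ev : E
  inst : E → Option A
  dom : ∀ e', (inst e').isSome ↔ P.le e' ev
  srt : ∀ e' a, inst e' = some a → sortA a = sortV (var e')

/-- The `𝓐`-expansion of a game, as order and consistency data. -/
def expn {E A V Srt : Type} (P : PreES E) (var : E → V)
    (sortA : A → Srt) (sortV : V → Srt) : PreES (ExEvent P var sortA sortV) where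
  le p q := P.le p.ev q.ev ∧ ∀ e', P.le e' p.ev → q.inst e' = p.inst e'
  con X := P.con (ExEvent.ev '' X) ∧ ∀ p ∈ X, ∀ q ∈ X, p.ev = q.ev → p = q

/-- The projection `red : expn(E) → E`. -/
def red {E A V Srt : Type} {P : PreES E} {var : E → V}
    {sortA : A → Srt} {sortV : V → Srt} (p : ExEvent P var sortA sortV) : E := p.ev

/-- The instantiation `Inst(e,ε) = ε(e)` (needs reflexivity of the order). -/
def ExEvent.Inst {E A V Srt : Type} {P : PreES E} {var : E → V}
    {sortA : A → Srt} {sortV : V → Srt} (href : ∀ e, P.le e e)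
    (p : ExEvent P var sortA sortV) : A :=
  (p.inst p.ev).get ((p.dom p.ev).mpr (href p.ev))

/-- Parallel composition of the order/consistency data of two event structures. -/
def parPre {E F : Type} (P : PreES E) (Q : PreES F) : PreES (E ⊕ F) where
  le x y :=
    match x, y with
    | .inl a, .inl b => P.le a b
    | .inr a, .inr b => Q.le a b
    | _, _ => False
  con X := P.con {a | Sum.inl a ∈ X} ∧ Q.con {b | Sum.inr b ∈ X}

/-- Restriction of the data of an event structure to a subset of events. -/
def subPre {E : Type} (P : PreES E) (p : E → Prop) : PreES {e : E // p e} where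
  le a b := P.le a.1 b.1
  con X := P.con (Subtype.val '' X)


private lemma es_wf {E : Type} (P : ES E) :
    WellFounded (fun a b => P.le a b ∧ a ≠ b) := by
  have key : ∀ n : ℕ, ∀ a : E, (P.causes_finite a).toFinset.card ≤ n →
      Acc (fun a b => P.le a b ∧ a ≠ b) a := by
    intro n
    induction n with
    | zero =>
      intro a ha
      exfalso
      have h1 : a ∈ (P.causes_finite a).toFinset := by
        simp only [Set.Finite.mem_toFinset, Set.mem_setOf_eq]
        exact P.le_refl a
      have := Finset.card_pos.mpr ⟨a, h1⟩
      omega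
    | succ n ih =>
      intro a ha
      constructor
      intro b hb
      apply ih
      have hss : (P.causes_finite b).toFinset ⊂ (P.causes_finite a).toFinset := by
        constructor
        · intro c hc
          simp only [Set.Finite.mem_toFinset, Set.mem_setOf_eq] at *
          exact P.le_trans _ _ _ hc hb.1
        · intro hsub2
          have h2 : a ∈ (P.causes_finite b).toFinset := hsub2 (by
            simp only [Set.Finite.mem_toFinset, Set.mem_setOf_eq]
            exact P.le_refl a)
          simp only [Set.Finite.mem_toFinset, Set.mem_setOf_eq] at h2
          exact hb.2 (P.le_antisymm _ _ hb.1 h2)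
      have := Finset.card_lt_card hss
      omega
  constructor
  intro a
  exact key _ a le_rfl

private lemma es_exists_min {E : Type} (P : ES E) {A : Set E} (hA : A.Nonempty) :
    ∃ e ∈ A, ∀ e' ∈ A, P.le e' e → e' = e := by
  obtain ⟨m, hm, hmin⟩ := (es_wf P).has_min A hA
  refine ⟨m, hm, fun e' he' hle => ?_⟩
  by_contra hne
  exact hmin e' he' ⟨hle, hne⟩

private lemma es_exists_max {E : Type} (P : ES E) {A : Set E} (hfin : A.Finite) :
    A.Nonempty → ∃ m ∈ A, ∀ e' ∈ A, P.le m e' → e' = m := by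
  refine Set.Finite.induction_on _ hfin (fun h => absurd h (by simp)) ?_
  intro a s _ _ ih _
  rcases s.eq_empty_or_nonempty with rfl | hs
  · refine ⟨a, Set.mem_insert _ _, fun e' he' _ => ?_⟩
    simpa using he'
  · obtain ⟨m, hm, hmax⟩ := ih hs
    by_cases hma : P.le m a ∧ m ≠ a
    · refine ⟨a, Set.mem_insert _ _, ?_⟩
      intro e' he' hae
      rcases Set.mem_insert_iff.mp he' with rfl | he'
      · rfl
      · exfalso
        have h1 : e' = m := hmax e' he' (P.le_trans _ _ _ hma.1 hae)
        subst h1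
        exact hma.2 (P.le_antisymm _ _ hma.1 hae)
    · push_neg at hma
      refine ⟨m, Set.mem_insert_of_mem _ hm, ?_⟩
      intro e' he' hme
      rcases Set.mem_insert_iff.mp he' with rfl | he'
      · exact (hma hme).symm
      · exact hmax e' he' hme

private lemma finite_subset_chain {α : Type} {c : Set (Set α)} (hc : IsChain (· ⊆ ·) c)
    (hne : c.Nonempty) {X : Set α} (hX : X.Finite) :
    X ⊆ ⋃₀ c → ∃ m ∈ c, X ⊆ m := by
  refine Set.Finite.induction_on _ hX (fun _ => ⟨hne.choose, hne.choose_spec, by simp⟩) ?_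
  intro a s _ _ ih hsub
  obtain ⟨m, hm, hsm⟩ := ih (fun e he => hsub (Set.mem_insert_of_mem _ he))
  obtain ⟨m', hm', ham'⟩ := Set.mem_sUnion.mp (hsub (Set.mem_insert _ _))
  rcases eq_or_ne m m' with rfl | hne'
  · exact ⟨m, hm, Set.insert_subset_iff.mpr ⟨ham', hsm⟩⟩
  · rcases hc hm hm' hne' with h | h
    · exact ⟨m', hm', Set.insert_subset_iff.mpr ⟨ham', hsm.trans h⟩⟩
    · exact ⟨m, hm, Set.insert_subset_iff.mpr ⟨h ham', hsm⟩⟩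

private lemma imm_below {E : Type} (P : ES E) {s' s₂ : E} (hle : P.le s' s₂) (hne : s' ≠ s₂) :
    ∃ t, P.le s' t ∧ P.toPreES.Imm t s₂ := by
  have hfin : {d | P.le s' d ∧ P.le d s₂ ∧ d ≠ s₂}.Finite :=
    (P.causes_finite s₂).subset (fun d hd => hd.2.1)
  have hne' : {d | P.le s' d ∧ P.le d s₂ ∧ d ≠ s₂}.Nonempty := ⟨s', P.le_refl s', hle, hne⟩
  obtain ⟨m, hm, hmax⟩ := es_exists_max P hfin hne'
  refine ⟨m, hm.1, hm.2.2, hm.2.1, ?_⟩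
  intro d hmd hds
  by_cases h : d = s₂
  · exact Or.inr h
  · exact Or.inl (hmax d ⟨P.le_trans _ _ _ hm.1 hmd, hds, h⟩ hmd)

private lemma enabled_of_min {E : Type} (G : ES E) {y w : Set E}
    (hy : G.toPreES.Config y) (hw : G.toPreES.Config w) (hwy : w ⊆ y)
    {e : E} (he : e ∈ y \ w) (hmin : ∀ e' ∈ y \ w, G.le e' e → e' = e) :
    G.toPreES.Enabled w e := by
  refine ⟨he.2, fun X hX hXf =>
    hy.1 X (hX.trans (Set.insert_subset_iff.mpr ⟨he.1, hwy⟩)) hXf, ?_⟩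
  intro a b hba ha
  rcases Set.mem_insert_iff.mp ha with ha | ha
  · rw [ha] at hba
    by_cases hb : b ∈ w
    · exact Set.mem_insert_of_mem _ hb
    · have hbY : b ∈ y := hy.2 _ _ hba he.1
      exact Set.mem_insert_iff.mpr (Or.inl (hmin b ⟨hbY, hb⟩ hba))
  · exact Set.mem_insert_of_mem _ (hw.2 _ _ hba ha)

private lemma sub_of_images_eq {SEv E : Type}
    (SS : ES SEv) (G : ES E) (polS : SEv → Bool) (polG : E → Bool)
    (σ : SEv → E)
    (hstrat : IsStrategy SS.toPreES G.toPreES polS polG σ)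
    (x : Set SEv)
    {y : Set E} (hneg : ∀ e ∈ y \ (σ '' x), polG e = false)
    {x₁ x₂ : Set SEv} (hx1 : x ⊆ x₁) (hc1 : SS.toPreES.Config x₁) (hi1 : σ '' x₁ = y)
    (hx2 : x ⊆ x₂) (hc2 : SS.toPreES.Config x₂) (hi2 : σ '' x₂ = y) :
    x₁ ⊆ x₂ := by
  obtain ⟨⟨hmap, hinj⟩, hpol, hrec, hinn⟩ := hstrat
  set z := x₁ ∩ x₂ with hzdef
  have hxz : x ⊆ z := Set.subset_inter hx1 hx2
  have hzc : SS.toPreES.Config z := by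
    refine ⟨fun X hX hXf => hc1.1 X (fun a ha => (hX ha).1) hXf, ?_⟩
    intro a b hba ha
    exact ⟨hc1.2 a b hba ha.1, hc2.2 a b hba ha.2⟩
  by_contra hcon
  have hA : (x₁ \ z).Nonempty := by
    rw [Set.nonempty_iff_ne_empty, Ne, Set.diff_eq_empty]
    intro h
    exact hcon (fun s hs => (h hs).2)
  obtain ⟨s, hsA, hsmin⟩ := es_exists_min SS hA
  have hsx1 : s ∈ x₁ := hsA.1
  have hsz : s ∉ z := hsA.2
  have hcauses : ∀ s', SS.le s' s → s' ≠ s → s' ∈ z := by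
    intro s' hle hne
    have hs'x1 : s' ∈ x₁ := hc1.2 s s' hle hsx1
    by_contra h
    exact hne (hsmin s' ⟨hs'x1, h⟩ hle)
  have hins : SS.toPreES.Config (insert s z) := by
    refine ⟨fun X hX hXf => hc1.1 X
      (hX.trans (Set.insert_subset_iff.mpr ⟨hsx1, fun a ha => ha.1⟩)) hXf, ?_⟩
    intro a b hba ha
    rcases Set.mem_insert_iff.mp ha with ha | ha
    · rw [ha] at hba
      by_cases hb : b = s
      · exact Set.mem_insert_iff.mpr (Or.inl hb)
      · exact Set.mem_insert_of_mem _ (hcauses b hba hb)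
    · exact Set.mem_insert_of_mem _ (hzc.2 a b hba ha)
  have hsen : SS.toPreES.Enabled z s := ⟨hsz, hins⟩
  have hey : σ s ∈ y := hi1 ▸ Set.mem_image_of_mem σ hsx1
  have hez : σ s ∉ σ '' z := by
    rintro ⟨t, htz, hte⟩
    have ht : t = s := hinj x₁ hc1 t htz.1 s hsx1 hte
    exact hsz (ht ▸ htz)
  have hneg' : polG (σ s) = false := by
    apply hneg
    exact ⟨hey, fun hmem => hez (Set.image_mono (f := σ) hxz hmem)⟩
  have heen : G.toPreES.Enabled (σ '' z) (σ s) := by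
    refine ⟨hez, ?_⟩
    have := hmap _ hins
    rwa [Set.image_insert_eq] at this
  have hey2 : σ s ∈ σ '' x₂ := hi2.symm ▸ hey
  obtain ⟨s₂, hs₂x₂, hs₂e⟩ := hey2
  have hs₂z : s₂ ∉ z := fun h => hez ⟨s₂, h, hs₂e⟩
  have himm : ∀ u, SS.toPreES.Imm u s₂ → u ∈ z := by
    intro u hu
    have hux₂ : u ∈ x₂ := hc2.2 s₂ u hu.2.1 hs₂x₂
    have hpolS₂ : polS s₂ = false := by rw [← hpol s₂, hs₂e]; exact hneg'
    have hGimm : G.toPreES.Imm (σ u) (σ s₂) := hinn u s₂ hu (Or.inl hpolS₂)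
    rw [hs₂e] at hGimm
    have hσu : σ u ∈ insert (σ s) (σ '' z) :=
      heen.2.2 (σ s) (σ u) hGimm.2.1 (Set.mem_insert _ _)
    rcases Set.mem_insert_iff.mp hσu with h1 | h1
    · exact absurd h1 hGimm.1
    · obtain ⟨t, htz, htu⟩ := h1
      have ht : t = u := hinj x₂ hc2 t htz.2 u hux₂ htu
      exact ht ▸ htz
  have hcauses₂ : ∀ s', SS.le s' s₂ → s' ∈ insert s₂ z := by
    intro s' hle
    by_cases hne : s' = s₂
    · exact Set.mem_insert_iff.mpr (Or.inl hne)
    · obtain ⟨t, hst, htimm⟩ := imm_below SS hle hne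
      exact Set.mem_insert_of_mem _ (hzc.2 t s' hst (himm t htimm))
  have hins₂ : SS.toPreES.Config (insert s₂ z) := by
    refine ⟨fun X hX hXf => hc2.1 X
      (hX.trans (Set.insert_subset_iff.mpr ⟨hs₂x₂, fun a ha => ha.2⟩)) hXf, ?_⟩
    intro a b hba ha
    rcases Set.mem_insert_iff.mp ha with ha | ha
    · exact hcauses₂ b (ha ▸ hba)
    · exact Set.mem_insert_of_mem _ (hzc.2 a b hba ha)
  have hs₂en : SS.toPreES.Enabled z s₂ := ⟨hs₂z, hins₂⟩
  obtain ⟨u, _, huniq⟩ := hrec z hzc (σ s) hneg' heen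
  have h1 : s = u := huniq s ⟨hsen, rfl⟩
  have h2 : s₂ = u := huniq s₂ ⟨hs₂en, hs₂e⟩
  have hss : s ∈ x₂ := by rw [h1.trans h2.symm]; exact hs₂x₂
  exact hsA.2 ⟨hsx1, hss⟩

/-- for a strategy `σ : S → E`, a configuration `x` of `S` and a
configuration `y` of `E` with `σ x ⊆⁻ y` (only negative events added), there is
a unique configuration `x' ⊇ x` with `σ x' = y`. -/
theorem strategy_neg_extension {SEv E : Type}
    (SS : ES SEv) (G : ES E) (polS : SEv → Bool) (polG : E → Bool)
    (σ : SEv → E)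
    (hstrat : IsStrategy SS.toPreES G.toPreES polS polG σ)
    (x : Set SEv) (hx : SS.toPreES.Config x)
    (y : Set E) (hy : G.toPreES.Config y)
    (hsub : σ '' x ⊆ y)
    (hneg : ∀ e ∈ y \ (σ '' x), polG e = false) :
    ∃! x' : Set SEv, x ⊆ x' ∧ SS.toPreES.Config x' ∧ σ '' x' = y := by
  have hchainub : ∀ c ⊆ {x' : Set SEv | x ⊆ x' ∧ SS.toPreES.Config x' ∧ σ '' x' ⊆ y},
      IsChain (· ⊆ ·) c → c.Nonempty →
      ∃ ub ∈ {x' : Set SEv | x ⊆ x' ∧ SS.toPreES.Config x' ∧ σ '' x' ⊆ y}, ∀ s ∈ c, s ⊆ ub := by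
    intro c hcC hchain hcne
    refine ⟨⋃₀ c, ⟨?_, ⟨?_, ?_⟩, ?_⟩, fun s hs => Set.subset_sUnion_of_mem hs⟩
    · obtain ⟨w, hw⟩ := hcne
      exact (hcC hw).1.trans (Set.subset_sUnion_of_mem hw)
    · intro X hX hXf
      obtain ⟨w, hwc, hXw⟩ := finite_subset_chain hchain hcne hXf hX
      exact (hcC hwc).2.1.1 X hXw hXf
    · intro a b hba ha
      obtain ⟨w, hwc, haw⟩ := Set.mem_sUnion.mp ha
      exact Set.mem_sUnion.mpr ⟨w, hwc, (hcC hwc).2.1.2 a b hba haw⟩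
    · rintro _ ⟨a, ha, rfl⟩
      obtain ⟨w, hwc, haw⟩ := Set.mem_sUnion.mp ha
      exact (hcC hwc).2.2 ⟨a, haw, rfl⟩
  obtain ⟨m, hxm, hmC, hmax⟩ := zorn_subset_nonempty
    {x' : Set SEv | x ⊆ x' ∧ SS.toPreES.Config x' ∧ σ '' x' ⊆ y} hchainub x ⟨subset_rfl, hx, hsub⟩
  have hxmsub : x ⊆ m := hmC.1
  have hmcfg : SS.toPreES.Config m := hmC.2.1
  have hmy : σ '' m ⊆ y := hmC.2.2
  have himg : σ '' m = y := by
    by_contra hne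
    have hA : (y \ σ '' m).Nonempty := by
      rw [Set.nonempty_iff_ne_empty, Ne, Set.diff_eq_empty]
      intro h
      exact hne (Set.Subset.antisymm hmy h)
    obtain ⟨e, heA, hemin⟩ := es_exists_min G hA
    have hen : G.toPreES.Enabled (σ '' m) e :=
      enabled_of_min G hy (hstrat.1.1 m hmcfg) hmy heA hemin
    have hneg' : polG e = false :=
      hneg e ⟨heA.1, fun hc => heA.2 (Set.image_mono (f := σ) hxmsub hc)⟩
    obtain ⟨s, ⟨hsen, hse⟩, _⟩ := hstrat.2.2.1 m hmcfg e hneg' hen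
    have hin : insert s m ∈ {x' : Set SEv | x ⊆ x' ∧ SS.toPreES.Config x' ∧ σ '' x' ⊆ y} := by
      refine ⟨hxmsub.trans (Set.subset_insert _ _), hsen.2, ?_⟩
      rw [Set.image_insert_eq, hse]
      exact Set.insert_subset_iff.mpr ⟨heA.1, hmy⟩
    have hsm : s ∈ m := hmax hin (Set.subset_insert _ _) (Set.mem_insert _ _)
    exact hsen.1 hsm
  refine ⟨m, ⟨hxmsub, hmcfg, himg⟩, ?_⟩
  rintro x' ⟨hx'1, hx'2, hx'3⟩
  exact Set.Subset.antisymm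
    (sub_of_images_eq SS G polS polG σ hstrat x hneg hx'1 hx'2 hx'3 hxmsub hmcfg himg)
    (sub_of_images_eq SS G polS polG σ hstrat x hneg hxmsub hmcfg himg hx'1 hx'2 hx'3)
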